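/- arXiv:1207.1893 — 3 statements merged into one kernel-verified Lean document; each statement's English description precedes it below -/
import Mathlib

section
/- (Arbitrary impulse sequences.) Let A, J be real n×n matrices and suppose there exists a real symmetric positive definite n×n matrix P such that AᵀP + PA is negative definite and JᵀPJ − P is negative definite. Then ℐ(P,A,J,s) is negative definite for every s ≥ 0, and consequently for every sequence (T_k)_{k∈ℕ} of positive reals and every x₀ ∈ ℝⁿ, the sequence defined by x_{k+1} = exp(T_k·A)·J·x_k, x_0 = x₀, satisfies x_{k+1}ᵀP x_{k+1} < x_kᵀP x_k whenever x_k ≠ 0. -/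
open Matrix Filter

/-- Matrix exponential of a real square matrix. -/
noncomputable def mexp {n : ℕ} (A : Matrix (Fin n) (Fin n) ℝ) : Matrix (Fin n) (Fin n) ℝ :=
  NormedSpace.exp A

/-- ℐ(P,A,J,T) := Jᵀ·exp(T·Aᵀ)·P·exp(T·A)·J − P. -/
noncomputable def scrI {n : ℕ} (P A J : Matrix (Fin n) (Fin n) ℝ) (T : ℝ) :
    Matrix (Fin n) (Fin n) ℝ :=
  Jᵀ * mexp (T • Aᵀ) * P * mexp (T • A) * J - P

/-- xᵀMx < 0 for all x ≠ 0. -/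
def negDef {m : Type*} [Fintype m] (M : Matrix m m ℝ) : Prop :=
  ∀ x : m → ℝ, x ≠ 0 → x ⬝ᵥ M.mulVec x < 0

/-- xᵀMx > 0 for all x ≠ 0. -/
def posDef {m : Type*} [Fintype m] (M : Matrix m m ℝ) : Prop :=
  ∀ x : m → ℝ, x ≠ 0 → 0 < x ⬝ᵥ M.mulVec x

/-- xᵀMx ≥ 0 for all x. -/
def posSemidef {m : Type*} [Fintype m] (M : Matrix m m ℝ) : Prop :=
  ∀ x : m → ℝ, 0 ≤ x ⬝ᵥ M.mulVec x

section aux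
variable {n : ℕ}

attribute [local instance] Matrix.linftyOpNormedRing Matrix.linftyOpNormedAlgebra

lemma mexp_mulVec_ne_zero (A : Matrix (Fin n) (Fin n) ℝ) {x : Fin n → ℝ} (hx : x ≠ 0)
    (t : ℝ) : mexp (t • A) *ᵥ x ≠ 0 := by
  intro h
  apply hx
  have h1 : mexp (-(t • A)) * mexp (t • A) = 1 := by
    rw [mexp, mexp, ← Matrix.exp_add_of_commute (-(t • A)) (t • A) (Commute.neg_left rfl)]
    simp [NormedSpace.exp_zero]
  calc x = (mexp (-(t • A)) * mexp (t • A)) *ᵥ x := by rw [h1, Matrix.one_mulVec]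
    _ = mexp (-(t • A)) *ᵥ (mexp (t • A) *ᵥ x) := by rw [Matrix.mulVec_mulVec]
    _ = 0 := by rw [h, Matrix.mulVec_zero]

lemma hasDerivAt_mexp_apply (A : Matrix (Fin n) (Fin n) ℝ) (x : Fin n → ℝ) (i : Fin n)
    (t : ℝ) :
    HasDerivAt (fun s : ℝ => (mexp (s • A) *ᵥ x) i) ((A *ᵥ (mexp (t • A) *ᵥ x)) i) t := by
  have h := hasDerivAt_exp_smul_const' A t
  let ℓ : Matrix (Fin n) (Fin n) ℝ →ₗ[ℝ] ℝ :=
    { toFun := fun M => (M *ᵥ x) i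
      map_add' := by intro M N; simp [Matrix.add_mulVec]
      map_smul' := by intro c M; simp [Matrix.smul_mulVec] }
  have hc : Continuous ℓ := ℓ.continuous_of_finiteDimensional
  have := (ContinuousLinearMap.hasFDerivAt (𝕜 := ℝ) ⟨ℓ, hc⟩).comp_hasDerivAt t h
  show HasDerivAt (fun s : ℝ => (NormedSpace.exp (s • A) *ᵥ x) i) _ t
  exact this.congr_deriv (by rw [Matrix.mulVec_mulVec]; rfl)

lemma hasDerivAt_V (A P : Matrix (Fin n) (Fin n) ℝ) (x : Fin n → ℝ) (t : ℝ) :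
    HasDerivAt (fun s : ℝ => (mexp (s • A) *ᵥ x) ⬝ᵥ P *ᵥ (mexp (s • A) *ᵥ x))
      ((mexp (t • A) *ᵥ x) ⬝ᵥ (Aᵀ * P + P * A) *ᵥ (mexp (t • A) *ᵥ x)) t := by
  set y := mexp (t • A) *ᵥ x with hy
  have hi : ∀ i : Fin n, HasDerivAt
      (fun s : ℝ => (mexp (s • A) *ᵥ x) i * ∑ j, P i j * (mexp (s • A) *ᵥ x) j)
      ((A *ᵥ y) i * ∑ j, P i j * y j + y i * ∑ j, P i j * (A *ᵥ y) j) t := by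
    intro i
    exact (hasDerivAt_mexp_apply A x i t).mul
      (HasDerivAt.fun_sum fun j _ => (hasDerivAt_mexp_apply A x j t).const_mul (P i j))
  have h := HasDerivAt.fun_sum (fun i (_ : i ∈ Finset.univ) => hi i)
  have e1 : ∀ s : ℝ, (mexp (s • A) *ᵥ x) ⬝ᵥ P *ᵥ (mexp (s • A) *ᵥ x)
      = ∑ i, (mexp (s • A) *ᵥ x) i * ∑ j, P i j * (mexp (s • A) *ᵥ x) j := by
    intro s; simp [dotProduct, Matrix.mulVec]
  have e2 : y ⬝ᵥ (Aᵀ * P + P * A) *ᵥ y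
      = ∑ i, ((A *ᵥ y) i * ∑ j, P i j * y j + y i * ∑ j, P i j * (A *ᵥ y) j) := by
    have : (A *ᵥ y) ⬝ᵥ P *ᵥ y + y ⬝ᵥ P *ᵥ (A *ᵥ y)
        = ∑ i, ((A *ᵥ y) i * ∑ j, P i j * y j + y i * ∑ j, P i j * (A *ᵥ y) j) := by
      simp [dotProduct, Matrix.mulVec, Finset.sum_add_distrib]
    rw [← this, Matrix.add_mulVec, dotProduct_add, ← Matrix.mulVec_mulVec,
      Matrix.dotProduct_mulVec y Aᵀ, Matrix.vecMul_transpose, ← Matrix.mulVec_mulVec]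
  rw [e2]
  exact h.congr_deriv rfl |>.congr_of_eventuallyEq (Filter.Eventually.of_forall fun s => (e1 s))
end aux

section aux2
variable {n : ℕ}

lemma V_le (A P : Matrix (Fin n) (Fin n) ℝ) (hC : negDef (Aᵀ * P + P * A))
    {x : Fin n → ℝ} (hx : x ≠ 0) {s : ℝ} (hs : 0 ≤ s) :
    (mexp (s • A) *ᵥ x) ⬝ᵥ P *ᵥ (mexp (s • A) *ᵥ x) ≤ x ⬝ᵥ P *ᵥ x := by
  have hanti : StrictAnti (fun s : ℝ => (mexp (s • A) *ᵥ x) ⬝ᵥ P *ᵥ (mexp (s • A) *ᵥ x)) :=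
    strictAnti_of_hasDerivAt_neg (fun t => hasDerivAt_V A P x t)
      (fun t => hC _ (mexp_mulVec_ne_zero A hx t))
  have h0 : (mexp ((0 : ℝ) • A) *ᵥ x) ⬝ᵥ P *ᵥ (mexp ((0 : ℝ) • A) *ᵥ x) = x ⬝ᵥ P *ᵥ x := by
    simp [mexp, NormedSpace.exp_zero]
  calc (mexp (s • A) *ᵥ x) ⬝ᵥ P *ᵥ (mexp (s • A) *ᵥ x)
      ≤ (mexp ((0:ℝ) • A) *ᵥ x) ⬝ᵥ P *ᵥ (mexp ((0:ℝ) • A) *ᵥ x) := hanti.antitone hs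
    _ = x ⬝ᵥ P *ᵥ x := h0

lemma quad (P A J : Matrix (Fin n) (Fin n) ℝ) (s : ℝ) (x : Fin n → ℝ) :
    x ⬝ᵥ (Jᵀ * mexp (s • Aᵀ) * P * mexp (s • A) * J - P) *ᵥ x
      = (mexp (s • A) *ᵥ (J *ᵥ x)) ⬝ᵥ P *ᵥ (mexp (s • A) *ᵥ (J *ᵥ x)) - x ⬝ᵥ P *ᵥ x := by
  have hT : mexp (s • Aᵀ) = (mexp (s • A))ᵀ := by
    rw [mexp, mexp, ← Matrix.transpose_smul, Matrix.exp_transpose]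
  rw [hT, Matrix.sub_mulVec, dotProduct_sub]
  congr 1
  simp only [← Matrix.mulVec_mulVec]
  rw [Matrix.dotProduct_mulVec, Matrix.vecMul_transpose, Matrix.dotProduct_mulVec,
    Matrix.vecMul_transpose, Matrix.dotProduct_mulVec]
end aux2

lemma quadJ {n : ℕ} (P J : Matrix (Fin n) (Fin n) ℝ) (x : Fin n → ℝ) :
    x ⬝ᵥ (Jᵀ * P * J - P) *ᵥ x = (J *ᵥ x) ⬝ᵥ P *ᵥ (J *ᵥ x) - x ⬝ᵥ P *ᵥ x := by
  rw [Matrix.sub_mulVec, dotProduct_sub]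
  congr 1
  simp only [← Matrix.mulVec_mulVec]
  rw [Matrix.dotProduct_mulVec, Matrix.vecMul_transpose, Matrix.dotProduct_mulVec]

/-- Arbitrary impulse sequences: if `P ≻ 0` is symmetric with `AᵀP + PA ≺ 0`
and `JᵀPJ − P ≺ 0`, then `ℐ(P,A,J,s) ≺ 0` for all `s ≥ 0`, and along any impulsive trajectory
with positive dwell-times the Lyapunov value `xᵀPx` strictly decreases at each step where the
state is nonzero. -/
theorem stmt3 {n : ℕ} (A J : Matrix (Fin n) (Fin n) ℝ)
    (P : Matrix (Fin n) (Fin n) ℝ) (hPsym : P.IsSymm) (hP : posDef P)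
    (hC : negDef (Aᵀ * P + P * A)) (hD : negDef (Jᵀ * P * J - P)) :
    (∀ s : ℝ, 0 ≤ s → negDef (scrI P A J s)) ∧
    (∀ Tk : ℕ → ℝ, (∀ k, 0 < Tk k) →
      ∀ x₀ : Fin n → ℝ, ∀ x : ℕ → Fin n → ℝ, x 0 = x₀ →
        (∀ k, x (k + 1) = (mexp (Tk k • A) * J).mulVec (x k)) →
        ∀ k, x k ≠ 0 →
          (x (k + 1)) ⬝ᵥ P.mulVec (x (k + 1)) < (x k) ⬝ᵥ P.mulVec (x k)) := by
  have main : ∀ s : ℝ, 0 ≤ s → negDef (scrI P A J s) := by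
    intro s hs x hx
    rw [scrI, quad]
    by_cases hJx : J *ᵥ x = 0
    · simp only [hJx, Matrix.mulVec_zero, dotProduct_zero, zero_sub, neg_neg,
        zero_dotProduct]
      simpa using neg_neg_of_pos (hP x hx)
    · have h1 := V_le A P hC hJx hs
      have h2 := hD x hx
      rw [quadJ] at h2
      linarith
  refine ⟨main, ?_⟩
  intro Tk hTk x₀ x hx0 hrec k hk
  have hx1 : x (k + 1) = mexp (Tk k • A) *ᵥ (J *ᵥ x k) := by
    rw [hrec k, ← Matrix.mulVec_mulVec]
  have h := main (Tk k) (le_of_lt (hTk k)) (x k) hk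
  rw [scrI, quad] at h
  rw [hx1]
  linarith [h]
end

section
/- (Maximal dwell-time.) Let T > 0 and let A, J be real n×n matrices. Suppose there exists a real symmetric positive definite n×n matrix P such that AᵀP + PA is positive definite and ℐ(P,A,J,T) is negative definite. Then ℐ(P,A,J,s) is negative definite for every s with 0 ≤ s ≤ T, and consequently for every sequence (T_k)_{k∈ℕ} of reals with 0 < T_k ≤ T for all k and every x₀ ∈ ℝⁿ, the sequence defined by x_{k+1} = exp(T_k·A)·J·x_k, x_0 = x₀, tends to 0 as k → ∞. -/
open Matrix Filter

lemma mexp_entry_hasDerivAt {n : ℕ} (A : Matrix (Fin n) (Fin n) ℝ) (z : Fin n → ℝ) (t : ℝ)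
    (i : Fin n) :
    HasDerivAt (fun u : ℝ => (mexp (u • A)).mulVec z i)
      (A.mulVec ((mexp (t • A)).mulVec z) i) t := by
  letI : SeminormedRing (Matrix (Fin n) (Fin n) ℝ) := Matrix.linftyOpSemiNormedRing
  letI : NormedRing (Matrix (Fin n) (Fin n) ℝ) := Matrix.linftyOpNormedRing
  letI : NormedAlgebra ℝ (Matrix (Fin n) (Fin n) ℝ) := Matrix.linftyOpNormedAlgebra
  have h := hasDerivAt_exp_smul_const' (𝕂 := ℝ) A t
  let L : Matrix (Fin n) (Fin n) ℝ →ₗ[ℝ] ℝ :=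
    { toFun := fun M => M.mulVec z i
      map_add' := fun M N => by simp [Matrix.add_mulVec]
      map_smul' := fun c M => by simp [Matrix.smul_mulVec] }
  have hL := (LinearMap.toContinuousLinearMap L).hasFDerivAt.comp_hasDerivAt t h
  simp only [mexp, Matrix.mulVec_mulVec]; exact hL

lemma quad_mono {n : ℕ} (A P : Matrix (Fin n) (Fin n) ℝ)
    (hC : ∀ y : Fin n → ℝ, 0 ≤ y ⬝ᵥ (Aᵀ * P + P * A).mulVec y) (z : Fin n → ℝ) :
    Monotone (fun u : ℝ =>
      (mexp (u • A)).mulVec z ⬝ᵥ P.mulVec ((mexp (u • A)).mulVec z)) := by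
  set y : ℝ → Fin n → ℝ := fun u => (mexp (u • A)).mulVec z with hy
  have hderiv : ∀ t : ℝ, HasDerivAt (fun u => y u ⬝ᵥ P.mulVec (y u))
      (y t ⬝ᵥ (Aᵀ * P + P * A).mulVec (y t)) t := by
    intro t
    set y' : Fin n → ℝ := A.mulVec (y t) with hy'
    have hcomp : ∀ i, HasDerivAt (fun u => y u i) (y' i) t := fun i =>
      mexp_entry_hasDerivAt A z t i
    have h1 : HasDerivAt (fun u => ∑ i, y u i * ∑ j, P i j * y u j)
        (∑ i, (y' i * ∑ j, P i j * y t j + y t i * ∑ j, P i j * y' j)) t := by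
      refine HasDerivAt.fun_sum fun i _ => ?_
      exact (hcomp i).mul (HasDerivAt.fun_sum fun j _ => (hcomp j).const_mul (P i j))
    have e1 : (fun u => y u ⬝ᵥ P.mulVec (y u)) = fun u => ∑ i, y u i * ∑ j, P i j * y u j := by
      funext u; simp [dotProduct, mulVec]
    have e2 : y t ⬝ᵥ (Aᵀ * P + P * A).mulVec (y t)
        = ∑ i, (y' i * ∑ j, P i j * y t j + y t i * ∑ j, P i j * y' j) := by
      have h3 : y t ⬝ᵥ (Aᵀ * P + P * A).mulVec (y t)
          = y' ⬝ᵥ P.mulVec (y t) + y t ⬝ᵥ P.mulVec y' := by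
        rw [Matrix.add_mulVec, dotProduct_add, ← Matrix.mulVec_mulVec,
          ← Matrix.mulVec_mulVec, hy']
        congr 1
        rw [Matrix.dotProduct_mulVec (y t) Aᵀ, Matrix.vecMul_transpose]
      rw [h3]
      simp [dotProduct, mulVec, Finset.sum_add_distrib]
    rw [e1, e2]
    exact h1
  exact monotone_of_deriv_nonneg (fun t => (hderiv t).differentiableAt)
    (fun t => by rw [(hderiv t).deriv]; exact hC _)

lemma scrI_quad {n : ℕ} (P A J : Matrix (Fin n) (Fin n) ℝ) (s : ℝ) (x : Fin n → ℝ) :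
    x ⬝ᵥ (scrI P A J s).mulVec x =
      (mexp (s • A)).mulVec (J.mulVec x) ⬝ᵥ P.mulVec ((mexp (s • A)).mulVec (J.mulVec x))
        - x ⬝ᵥ P.mulVec x := by
  have ht : mexp (s • Aᵀ) = (mexp (s • A))ᵀ := by
    rw [mexp, mexp, ← Matrix.transpose_smul s A, Matrix.exp_transpose]
  set E := mexp (s • A) with hE
  have hm : Jᵀ * Eᵀ * P * E * J = (E * J)ᵀ * P * (E * J) := by
    rw [Matrix.transpose_mul]; noncomm_ring
  rw [scrI, ht, Matrix.sub_mulVec, dotProduct_sub, hm]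
  congr 1
  rw [Matrix.mul_assoc, ← Matrix.mulVec_mulVec,
    Matrix.dotProduct_mulVec x (E * J)ᵀ, Matrix.vecMul_transpose, ← Matrix.mulVec_mulVec,
    ← Matrix.mulVec_mulVec, ← Matrix.mulVec_mulVec]

lemma quad_smul {n : ℕ} (M : Matrix (Fin n) (Fin n) ℝ) (c : ℝ) (v : Fin n → ℝ) :
    (c • v) ⬝ᵥ M.mulVec (c • v) = c ^ 2 * (v ⬝ᵥ M.mulVec v) := by
  rw [Matrix.mulVec_smul, smul_dotProduct, dotProduct_smul]
  simp [smul_eq_mul]; ring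

/-- Maximal dwell-time: if `P ≻ 0` is symmetric with `AᵀP + PA ≻ 0` and
`ℐ(P,A,J,T) ≺ 0`, then `ℐ(P,A,J,s) ≺ 0` for all `0 ≤ s ≤ T`, and every impulsive trajectory
with dwell-times `0 < T_k ≤ T` tends to `0`. -/
theorem stmt4 {n : ℕ} (T : ℝ) (hT : 0 < T) (A J : Matrix (Fin n) (Fin n) ℝ)
    (P : Matrix (Fin n) (Fin n) ℝ) (hPsym : P.IsSymm) (hP : posDef P)
    (hC : posDef (Aᵀ * P + P * A)) (hI : negDef (scrI P A J T)) :
    (∀ s : ℝ, 0 ≤ s → s ≤ T → negDef (scrI P A J s)) ∧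
    (∀ Tk : ℕ → ℝ, (∀ k, 0 < Tk k ∧ Tk k ≤ T) →
      ∀ x₀ : Fin n → ℝ, ∀ x : ℕ → Fin n → ℝ, x 0 = x₀ →
        (∀ k, x (k + 1) = (mexp (Tk k • A) * J).mulVec (x k)) →
        Tendsto x atTop (nhds 0)) := by
  have hCnn : ∀ y : Fin n → ℝ, 0 ≤ y ⬝ᵥ (Aᵀ * P + P * A).mulVec y := by
    intro y; rcases eq_or_ne y 0 with h | h
    · simp [h]
    · exact (hC y h).le
  have hPnn : ∀ v : Fin n → ℝ, 0 ≤ v ⬝ᵥ P.mulVec v := by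
    intro v; rcases eq_or_ne v 0 with h | h
    · simp [h]
    · exact (hP v h).le
  have key : ∀ s : ℝ, s ≤ T → ∀ v : Fin n → ℝ,
      v ⬝ᵥ (scrI P A J s).mulVec v ≤ v ⬝ᵥ (scrI P A J T).mulVec v := by
    intro s hs v
    rw [scrI_quad, scrI_quad]
    exact sub_le_sub_right (quad_mono A P hCnn (J.mulVec v) hs) _
  have part1 : ∀ s : ℝ, 0 ≤ s → s ≤ T → negDef (scrI P A J s) := by
    intro s _ hs v hv
    exact lt_of_le_of_lt (key s hs v) (hI v hv)
  refine ⟨part1, ?_⟩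
  intro Tk hTk x₀ x hx0 hxrec
  rcases Nat.eq_zero_or_pos n with hn | hn
  · subst hn
    have hx : x = fun _ => 0 := funext fun k => funext fun i => i.elim0
    rw [hx]; exact tendsto_const_nhds
  haveI : Nonempty (Fin n) := ⟨⟨0, hn⟩⟩
  -- extrema on the unit sphere
  have hcont : ∀ M : Matrix (Fin n) (Fin n) ℝ,
      Continuous fun v : Fin n → ℝ => v ⬝ᵥ M.mulVec v := by
    intro M
    have he : (fun v : Fin n → ℝ => v ⬝ᵥ M.mulVec v)
        = fun v => ∑ i, v i * ∑ j, M i j * v j := by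
      funext v; simp [dotProduct, mulVec]
    rw [he]
    exact continuous_finset_sum _ fun i _ =>
      (continuous_apply i).mul (continuous_finset_sum _ fun j _ =>
        continuous_const.mul (continuous_apply j))
  have hsph : IsCompact (Metric.sphere (0 : Fin n → ℝ) 1) := isCompact_sphere _ _
  have hne : (Metric.sphere (0 : Fin n → ℝ) 1).Nonempty := by
    refine ⟨fun _ => 1, ?_⟩
    rw [mem_sphere_zero_iff_norm]
    simpa using (Pi.norm_const (1 : ℝ) : ‖(fun _ : Fin n => (1:ℝ))‖ = ‖(1:ℝ)‖)
  obtain ⟨u₁, hu₁s, hu₁⟩ := hsph.exists_isMinOn hne (hcont P).continuousOn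
  obtain ⟨u₂, hu₂s, hu₂⟩ := hsph.exists_isMaxOn hne (hcont P).continuousOn
  obtain ⟨u₃, hu₃s, hu₃⟩ := hsph.exists_isMaxOn hne (hcont (scrI P A J T)).continuousOn
  have hsne : ∀ v : Fin n → ℝ, v ∈ Metric.sphere (0 : Fin n → ℝ) 1 → v ≠ 0 := by
    intro v hv h0
    rw [mem_sphere_zero_iff_norm, h0] at hv
    simp at hv
  set m : ℝ := u₁ ⬝ᵥ P.mulVec u₁ with hmdef
  set Mb : ℝ := u₂ ⬝ᵥ P.mulVec u₂ with hMbdef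
  set c : ℝ := u₃ ⬝ᵥ (scrI P A J T).mulVec u₃ with hcdef
  have hm : 0 < m := hP u₁ (hsne u₁ hu₁s)
  have hMb : 0 < Mb := hP u₂ (hsne u₂ hu₂s)
  have hc : c < 0 := hI u₃ (hsne u₃ hu₃s)
  -- scaling to the sphere
  have hmem : ∀ v : Fin n → ℝ, v ≠ 0 → ‖v‖⁻¹ • v ∈ Metric.sphere (0 : Fin n → ℝ) 1 := by
    intro v hv
    rw [mem_sphere_zero_iff_norm, norm_smul]
    have : ‖v‖ ≠ 0 := norm_ne_zero_iff.mpr hv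
    rw [norm_inv, norm_norm]
    field_simp
  have scale : ∀ (M : Matrix (Fin n) (Fin n) ℝ) (v : Fin n → ℝ), v ≠ 0 →
      v ⬝ᵥ M.mulVec v = ‖v‖ ^ 2 * ((‖v‖⁻¹ • v) ⬝ᵥ M.mulVec (‖v‖⁻¹ • v)) := by
    intro M v hv
    rw [quad_smul]
    have h0 : ‖v‖ ≠ 0 := norm_ne_zero_iff.mpr hv
    field_simp
  have hlow : ∀ v : Fin n → ℝ, m * ‖v‖ ^ 2 ≤ v ⬝ᵥ P.mulVec v := by
    intro v
    rcases eq_or_ne v 0 with h | h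
    · simp [h]
    · rw [scale P v h]
      have h1 : m ≤ (‖v‖⁻¹ • v) ⬝ᵥ P.mulVec (‖v‖⁻¹ • v) := isMinOn_iff.mp hu₁ _ (hmem v h)
      nlinarith [sq_nonneg ‖v‖]
  have hup : ∀ v : Fin n → ℝ, v ⬝ᵥ P.mulVec v ≤ Mb * ‖v‖ ^ 2 := by
    intro v
    rcases eq_or_ne v 0 with h | h
    · simp [h]
    · rw [scale P v h]
      have h1 : (‖v‖⁻¹ • v) ⬝ᵥ P.mulVec (‖v‖⁻¹ • v) ≤ Mb := isMaxOn_iff.mp hu₂ _ (hmem v h)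
      nlinarith [sq_nonneg ‖v‖]
  have hSup : ∀ v : Fin n → ℝ, v ⬝ᵥ (scrI P A J T).mulVec v ≤ c * ‖v‖ ^ 2 := by
    intro v
    rcases eq_or_ne v 0 with h | h
    · simp [h]
    · rw [scale _ v h]
      have h1 : (‖v‖⁻¹ • v) ⬝ᵥ (scrI P A J T).mulVec (‖v‖⁻¹ • v) ≤ c :=
        isMaxOn_iff.mp hu₃ _ (hmem v h)
      nlinarith [sq_nonneg ‖v‖]
  -- the contraction factor
  set q : ℝ := 1 + c / Mb with hqdef
  have hq1 : q < 1 := by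
    have h5 : c / Mb < 0 := div_neg_of_neg_of_pos hc hMb
    rw [hqdef]; linarith
  have hq0 : 0 ≤ q := by
    have hPS : 0 ≤ u₃ ⬝ᵥ P.mulVec u₃ + c := by
      have h1 := hPnn ((mexp (T • A)).mulVec (J.mulVec u₃))
      have h2 := scrI_quad P A J T u₃
      rw [hcdef, h2]
      linarith
    have h3 : u₃ ⬝ᵥ P.mulVec u₃ ≤ Mb := isMaxOn_iff.mp hu₂ _ hu₃s
    have h4 : 0 ≤ Mb + c := by linarith
    rw [hqdef]
    have h5 : (0:ℝ) ≤ (Mb + c) / Mb := div_nonneg h4 hMb.le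
    have hMb0 : Mb ≠ 0 := ne_of_gt hMb
    have h6 : (Mb + c) / Mb = 1 + c / Mb := by field_simp
    linarith
  -- geometric decay of the Lyapunov function
  have hdecay : ∀ k, (x k) ⬝ᵥ P.mulVec (x k) ≤ q ^ k * (x₀ ⬝ᵥ P.mulVec x₀) := by
    intro k
    induction k with
    | zero => simp [hx0]
    | succ k ih =>
      have hstep : (x (k + 1)) ⬝ᵥ P.mulVec (x (k + 1)) ≤
          (x k) ⬝ᵥ P.mulVec (x k) + (x k) ⬝ᵥ (scrI P A J T).mulVec (x k) := by
        have h1 : (x (k + 1)) ⬝ᵥ P.mulVec (x (k + 1)) =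
            (x k) ⬝ᵥ (scrI P A J (Tk k)).mulVec (x k) + (x k) ⬝ᵥ P.mulVec (x k) := by
          rw [hxrec k, scrI_quad, ← Matrix.mulVec_mulVec]
          ring
        rw [h1]
        have h2 := key (Tk k) (hTk k).2 (x k)
        linarith
      rcases eq_or_ne (x k) 0 with h0 | h0
      · have hz : x (k + 1) = 0 := by rw [hxrec k, h0, Matrix.mulVec_zero]
        rw [hz]
        have : (0 : Fin n → ℝ) ⬝ᵥ P.mulVec 0 = 0 := by simp
        rw [this]
        have := hPnn x₀
        positivity
      · have h4 : (x (k + 1)) ⬝ᵥ P.mulVec (x (k + 1)) ≤ q * ((x k) ⬝ᵥ P.mulVec (x k)) := by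
        -- c * ‖x k‖² ≤ (c/Mb) * QP (x k)
          have h5 : c * ‖x k‖ ^ 2 ≤ c / Mb * ((x k) ⬝ᵥ P.mulVec (x k)) := by
            rw [div_mul_eq_mul_div, le_div_iff₀ hMb]
            nlinarith [hup (x k)]
          have h6 := hSup (x k)
          rw [hqdef]
          nlinarith
        calc (x (k + 1)) ⬝ᵥ P.mulVec (x (k + 1)) ≤ q * ((x k) ⬝ᵥ P.mulVec (x k)) := h4
          _ ≤ q * (q ^ k * (x₀ ⬝ᵥ P.mulVec x₀)) := mul_le_mul_of_nonneg_left ih hq0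
          _ = q ^ (k + 1) * (x₀ ⬝ᵥ P.mulVec x₀) := by ring
  -- conclude convergence
  have hlim : Tendsto (fun k : ℕ => (x₀ ⬝ᵥ P.mulVec x₀ / m) * q ^ k) atTop (nhds 0) := by
    have := tendsto_pow_atTop_nhds_zero_of_lt_one hq0 hq1
    simpa using this.const_mul (x₀ ⬝ᵥ P.mulVec x₀ / m)
  have hsq : ∀ k, ‖x k‖ ^ 2 ≤ (x₀ ⬝ᵥ P.mulVec x₀ / m) * q ^ k := by
    intro k
    have h1 := hlow (x k)
    have h2 := hdecay k
    rw [div_mul_eq_mul_div, le_div_iff₀ hm]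
    nlinarith
  have h2 : Tendsto (fun k => ‖x k‖ ^ 2) atTop (nhds 0) :=
    squeeze_zero (fun k => sq_nonneg _) hsq hlim
  have h3 : Tendsto (fun k => ‖x k‖) atTop (nhds 0) := by
    have h4 := (Real.continuous_sqrt.tendsto 0).comp h2
    simpa [Function.comp_def, Real.sqrt_sq (norm_nonneg _)] using h4
  rw [tendsto_zero_iff_norm_tendsto_zero]
  exact h3
end

section
/- Let T > 0 and let A, J be real n×n matrices. Suppose there exist real symmetric positive definite n×n matrices P and Z, real symmetric n×n matrices Q and U, a real n×n matrix R, and a real n×2n matrix N such that Ψ(T) is negative definite and Φ(T) is negative definite. Then ℐ(P,A,J,T) is negative definite; that is, V(x) = xᵀPx is a discrete-time Lyapunov function for the system x_{k+1} = exp(T·A)·J·x_k. -/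
open Matrix Filter

/-- The n×2n block matrix `[I 0]`. -/
def Mxb (n : ℕ) : Matrix (Fin n) (Fin n ⊕ Fin n) ℝ := Matrix.fromCols 1 0

/-- The n×2n block matrix `[0 I]`. -/
def Mmb (n : ℕ) : Matrix (Fin n) (Fin n ⊕ Fin n) ℝ := Matrix.fromCols 0 1

/-- The n×2n block matrix `[I −J]`. -/
def Mzb {n : ℕ} (J : Matrix (Fin n) (Fin n) ℝ) : Matrix (Fin n) (Fin n ⊕ Fin n) ℝ :=
  Matrix.fromCols 1 (-J)

/-- He[X] := X + Xᵀ. -/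
def He {m : Type*} (X : Matrix m m ℝ) : Matrix m m ℝ := X + Xᵀ

/-- The 2n×2n matrix `F₀`. -/
def F0 {n : ℕ} (T : ℝ) (A J P Q R : Matrix (Fin n) (Fin n) ℝ)
    (N : Matrix (Fin n) (Fin n ⊕ Fin n) ℝ) :
    Matrix (Fin n ⊕ Fin n) (Fin n ⊕ Fin n) ℝ :=
  T • ((Mxb n)ᵀ * (Aᵀ * P + P * A) * Mxb n) - (Mzb J)ᵀ * Q * Mzb J
    + (Mmb n)ᵀ * (Jᵀ * P * J - P) * Mmb n
    + He (Nᵀ * Mzb J - (Mzb J)ᵀ * R * Mxb n)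

/-- The 2n×2n matrix `F₂`. -/
def F2 {n : ℕ} (A J Q R Z : Matrix (Fin n) (Fin n) ℝ) :
    Matrix (Fin n ⊕ Fin n) (Fin n ⊕ Fin n) ℝ :=
  He ((Mxb n)ᵀ * Aᵀ * Q * Mzb J + (Mxb n)ᵀ * Aᵀ * R * Mxb n + (Mzb J)ᵀ * R * A * Mxb n)
    + (Mxb n)ᵀ * Aᵀ * Z * A * Mxb n

/-- The 2n×2n matrix `F₃`. -/
def F3 {n : ℕ} (J U : Matrix (Fin n) (Fin n) ℝ) :
    Matrix (Fin n ⊕ Fin n) (Fin n ⊕ Fin n) ℝ :=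
  (Mmb n)ᵀ * Jᵀ * U * J * Mmb n

/-- The 2n×2n matrix `Ψ(T) = F₀ + T·(F₂ + F₃)`. -/
def Psi {n : ℕ} (T : ℝ) (A J P Z Q U R : Matrix (Fin n) (Fin n) ℝ)
    (N : Matrix (Fin n) (Fin n ⊕ Fin n) ℝ) :
    Matrix (Fin n ⊕ Fin n) (Fin n ⊕ Fin n) ℝ :=
  F0 T A J P Q R N + T • (F2 A J Q R Z + F3 J U)

/-- The 3n×3n block matrix `Φ(T) = [[F₀ − T·F₃, Nᵀ],[N, −Z/T]]`. -/
noncomputable def Phi {n : ℕ} (T : ℝ) (A J P Z Q U R : Matrix (Fin n) (Fin n) ℝ)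
    (N : Matrix (Fin n) (Fin n ⊕ Fin n) ℝ) :
    Matrix ((Fin n ⊕ Fin n) ⊕ Fin n) ((Fin n ⊕ Fin n) ⊕ Fin n) ℝ :=
  Matrix.fromBlocks (F0 T A J P Q R N - T • F3 J U) Nᵀ N (-(T⁻¹ • Z))

section AuxDeriv

attribute [local instance] Matrix.linftyOpNormedAddCommGroup Matrix.linftyOpNormedRing
  Matrix.linftyOpNormedAlgebra

lemma hasDerivAt_mexp_mulVec {n : ℕ} (A : Matrix (Fin n) (Fin n) ℝ) (c : Fin n → ℝ) (t : ℝ) :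
    HasDerivAt (fun s : ℝ => mexp (s • A) *ᵥ c) (A *ᵥ (mexp (t • A) *ᵥ c)) t := by
  have h := hasDerivAt_exp_smul_const' (𝕂 := ℝ) A t
  let L : Matrix (Fin n) (Fin n) ℝ →ₗ[ℝ] (Fin n → ℝ) :=
    { toFun := fun M => M *ᵥ c
      map_add' := fun M₁ M₂ => Matrix.add_mulVec _ _ _
      map_smul' := fun r M => Matrix.smul_mulVec r M c }
  have hL := (LinearMap.toContinuousLinearMap L).hasFDerivAt
    (x := NormedSpace.exp (t • A)) |>.comp_hasDerivAt t h
  rw [Matrix.mulVec_mulVec]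
  exact hL

end AuxDeriv

lemma hasDerivAt_dotProduct {m : Type*} [Fintype m] {u v : ℝ → m → ℝ} {u' v' : m → ℝ} {t : ℝ}
    (hu : HasDerivAt u u' t) (hv : HasDerivAt v v' t) :
    HasDerivAt (fun s => u s ⬝ᵥ v s) (u' ⬝ᵥ v t + u t ⬝ᵥ v') t := by
  have h : ∀ i : m, HasDerivAt (fun s => u s i * v s i) (u' i * v t i + u t i * v' i) t :=
    fun i => (hasDerivAt_pi.1 hu i).mul (hasDerivAt_pi.1 hv i)
  have h2 : HasDerivAt (fun s => ∑ i : m, u s i * v s i)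
      (∑ i : m, (u' i * v t i + u t i * v' i)) t := HasDerivAt.fun_sum (fun i _ => h i)
  simpa [dotProduct, Finset.sum_add_distrib] using h2

lemma hasDerivAt_mulVec {m l : Type*} [Fintype m] [Fintype l] (M : Matrix l m ℝ)
    {u : ℝ → m → ℝ} {u' : m → ℝ} {t : ℝ} (hu : HasDerivAt u u' t) :
    HasDerivAt (fun s => M *ᵥ u s) (M *ᵥ u') t := by
  rw [hasDerivAt_pi] at hu ⊢
  intro i
  have h2 : HasDerivAt (fun s => ∑ j : m, M i j * u s j) (∑ j : m, M i j * u' j) t :=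
    HasDerivAt.fun_sum (fun j _ => (hu j).const_mul (M i j))
  simpa [Matrix.mulVec, dotProduct] using h2

lemma dot_transpose_mulVec {m l : Type*} [Fintype m] [Fintype l] (M : Matrix m l ℝ)
    (a : l → ℝ) (b : m → ℝ) : a ⬝ᵥ Mᵀ *ᵥ b = (M *ᵥ a) ⬝ᵥ b := by
  rw [Matrix.dotProduct_mulVec, Matrix.vecMul_transpose]

lemma dot_symm {m : Type*} [Fintype m] {M : Matrix m m ℝ} (hM : M.IsSymm)
    (a b : m → ℝ) : a ⬝ᵥ M *ᵥ b = b ⬝ᵥ M *ᵥ a := by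
  rw [dotProduct_comm, Matrix.dotProduct_mulVec, ← Matrix.vecMul_transpose, hM.eq]

variable {n : ℕ}

lemma identI1 (T τ gg : ℝ) (A J P Q R U Z : Matrix (Fin n) (Fin n) ℝ)
    (N : Matrix (Fin n) (Fin n ⊕ Fin n) ℝ) (hQsym : Q.IsSymm)
    (v x : Fin n → ℝ) :
    T * ((A *ᵥ v) ⬝ᵥ P *ᵥ v + v ⬝ᵥ P *ᵥ (A *ᵥ v))
      - ((v - J *ᵥ x) ⬝ᵥ Q *ᵥ (v - J *ᵥ x) + 2 * ((v - J *ᵥ x) ⬝ᵥ R *ᵥ v))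
      + (T - τ) * ((A *ᵥ v) ⬝ᵥ Q *ᵥ (v - J *ᵥ x) + (v - J *ᵥ x) ⬝ᵥ Q *ᵥ (A *ᵥ v)
          + 2 * ((A *ᵥ v) ⬝ᵥ R *ᵥ v + (v - J *ᵥ x) ⬝ᵥ R *ᵥ (A *ᵥ v)))
      + x ⬝ᵥ (Jᵀ * P * J - P) *ᵥ x
      - gg + (T - τ) * ((A *ᵥ v) ⬝ᵥ Z *ᵥ (A *ᵥ v))
      + (T - 2 * τ) * ((J *ᵥ x) ⬝ᵥ U *ᵥ (J *ᵥ x))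
    = Sum.elim v x ⬝ᵥ (F0 T A J P Q R N) *ᵥ Sum.elim v x
      - 2 * (Sum.elim v x ⬝ᵥ Nᵀ *ᵥ (v - J *ᵥ x))
      + (T - τ) * (Sum.elim v x ⬝ᵥ (F2 A J Q R Z) *ᵥ Sum.elim v x)
      + (T - 2 * τ) * (Sum.elim v x ⬝ᵥ (F3 J U) *ᵥ Sum.elim v x)
      - gg := by
  simp only [F0, F2, F3, He, Mxb, Mmb, Mzb, Matrix.transpose_mul, Matrix.transpose_transpose,
    Matrix.transpose_add, Matrix.transpose_sub, Matrix.transpose_neg, Matrix.transpose_smul,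
    Matrix.add_mulVec, Matrix.sub_mulVec, Matrix.neg_mulVec, Matrix.smul_mulVec,
    ← Matrix.mulVec_mulVec, dot_transpose_mulVec,
    Matrix.mulVec_add, Matrix.mulVec_sub, Matrix.mulVec_neg, Matrix.mulVec_smul,
    Matrix.fromCols_mulVec_sumElim,
    Matrix.one_mulVec, Matrix.zero_mulVec, Matrix.mulVec_zero,
    dotProduct_add, dotProduct_sub, dotProduct_neg, dotProduct_smul,
    add_dotProduct, sub_dotProduct, neg_dotProduct, smul_dotProduct,
    dotProduct_zero, zero_dotProduct, smul_eq_mul, add_zero, zero_add]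
  simp only [dotProduct_comm]
  linear_combination (T - τ) * dot_symm hQsym v (A *ᵥ v) - (T - τ) * dot_symm hQsym (J *ᵥ x) (A *ᵥ v)

lemma identI2 (T : ℝ) (A J P Z Q U R : Matrix (Fin n) (Fin n) ℝ)
    (N : Matrix (Fin n) (Fin n ⊕ Fin n) ℝ) (η : Fin n ⊕ Fin n → ℝ) :
    η ⬝ᵥ Psi T A J P Z Q U R N *ᵥ η
      = η ⬝ᵥ F0 T A J P Q R N *ᵥ η
        + T * (η ⬝ᵥ F2 A J Q R Z *ᵥ η + η ⬝ᵥ F3 J U *ᵥ η) := by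
  simp [Psi, Matrix.add_mulVec, Matrix.smul_mulVec, dotProduct_add, dotProduct_smul,
    smul_eq_mul, mul_add]

lemma identI3 (T : ℝ) (A J P Z Q U R : Matrix (Fin n) (Fin n) ℝ)
    (N : Matrix (Fin n) (Fin n ⊕ Fin n) ℝ) (η : Fin n ⊕ Fin n → ℝ) (y : Fin n → ℝ) :
    Sum.elim η y ⬝ᵥ Phi T A J P Z Q U R N *ᵥ Sum.elim η y
      = η ⬝ᵥ F0 T A J P Q R N *ᵥ η - T * (η ⬝ᵥ F3 J U *ᵥ η)
        + (N *ᵥ η) ⬝ᵥ y + y ⬝ᵥ (N *ᵥ η) - T⁻¹ * (y ⬝ᵥ Z *ᵥ y) := by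
  simp [Phi, Matrix.fromBlocks_mulVec, sumElim_dotProduct_sumElim,
    Matrix.sub_mulVec, Matrix.smul_mulVec, Matrix.neg_mulVec, Matrix.add_mulVec,
    dot_transpose_mulVec, dotProduct_add, dotProduct_sub, dotProduct_neg, dotProduct_smul,
    smul_eq_mul]
  ring

/-- feasibility of the LMIs `Ψ(T) ≺ 0` and `Φ(T) ≺ 0` implies
`ℐ(P,A,J,T) ≺ 0`, i.e. `V(x) = xᵀPx` is a discrete-time Lyapunov function for
`x_{k+1} = exp(T·A)·J·x_k`. -/
theorem stmt6 {n : ℕ} (T : ℝ) (hT : 0 < T) (A J : Matrix (Fin n) (Fin n) ℝ)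
    (P Z Q U R : Matrix (Fin n) (Fin n) ℝ) (N : Matrix (Fin n) (Fin n ⊕ Fin n) ℝ)
    (hPsym : P.IsSymm) (hP : posDef P) (hZsym : Z.IsSymm) (hZ : posDef Z)
    (hQsym : Q.IsSymm) (hUsym : U.IsSymm)
    (hPsi : negDef (Psi T A J P Z Q U R N))
    (hPhi : negDef (Phi T A J P Z Q U R N)) :
    negDef (scrI P A J T) := by
  -- Z is positive definite in the mathlib sense, hence invertible
  have hZpd : Z.PosDef := by
    rw [Matrix.posDef_iff_dotProduct_mulVec]
    constructor
    · rw [Matrix.IsHermitian, Matrix.conjTranspose_eq_transpose_of_trivial]; exact hZsym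
    · intro u hu; simpa using hZ u hu
  have hZdet : IsUnit Z.det := hZpd.det_pos.ne'.isUnit
  have hZZinv : ∀ u : Fin n → ℝ, Z *ᵥ (Z⁻¹ *ᵥ u) = u := by
    intro u
    rw [Matrix.mulVec_mulVec, Matrix.mul_nonsing_inv _ hZdet, Matrix.one_mulVec]
  have hZsemi : ∀ u : Fin n → ℝ, 0 ≤ u ⬝ᵥ Z *ᵥ u := by
    intro u
    by_cases h : u = 0
    · simp [h]
    · exact (hZ u h).le
  intro x hx
  -- the trajectory
  set z : ℝ → Fin n → ℝ := fun τ => mexp (τ • A) *ᵥ (J *ᵥ x) with hzdef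
  have hz : ∀ τ, HasDerivAt z (A *ᵥ z τ) τ := fun τ => hasDerivAt_mexp_mulVec A (J *ᵥ x) τ
  have hz0 : z 0 = J *ᵥ x := by
    rw [hzdef]
    simp [mexp, NormedSpace.exp_zero, Matrix.one_mulVec]
  -- the accumulated energy `g` and its properties
  obtain ⟨g, hg, hg0, hgineq⟩ : ∃ g : ℝ → ℝ,
      (∀ τ, HasDerivAt g ((A *ᵥ z τ) ⬝ᵥ Z *ᵥ (A *ᵥ z τ)) τ) ∧ g 0 = 0 ∧
      ∀ τ, 0 ≤ τ → ∀ w : Fin n → ℝ,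
        0 ≤ g τ + 2 * (w ⬝ᵥ Z *ᵥ z τ - w ⬝ᵥ Z *ᵥ (J *ᵥ x)) + τ * (w ⬝ᵥ Z *ᵥ w) := by
    have hφd : ∀ s, HasDerivAt (fun s => (A *ᵥ z s) ⬝ᵥ Z *ᵥ (A *ᵥ z s))
        ((A *ᵥ (A *ᵥ z s)) ⬝ᵥ Z *ᵥ (A *ᵥ z s)
          + (A *ᵥ z s) ⬝ᵥ Z *ᵥ (A *ᵥ (A *ᵥ z s))) s := fun s =>
      hasDerivAt_dotProduct (hasDerivAt_mulVec A (hz s))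
        (hasDerivAt_mulVec Z (hasDerivAt_mulVec A (hz s)))
    have hφc : Continuous (fun s => (A *ᵥ z s) ⬝ᵥ Z *ᵥ (A *ᵥ z s)) :=
      continuous_iff_continuousAt.2 fun s => (hφd s).continuousAt
    refine ⟨fun τ => ∫ s in (0:ℝ)..τ, (A *ᵥ z s) ⬝ᵥ Z *ᵥ (A *ᵥ z s),
      fun τ => (hφc.integral_hasStrictDerivAt 0 τ).hasDerivAt,
      intervalIntegral.integral_same, ?_⟩
    intro τ hτ w
    have hcrossd : ∀ s : ℝ, HasDerivAt (fun σ => w ⬝ᵥ Z *ᵥ z σ)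
        (w ⬝ᵥ Z *ᵥ (A *ᵥ z s)) s := fun s => by
      simpa using hasDerivAt_dotProduct (hasDerivAt_const s w)
        (hasDerivAt_mulVec Z (hz s))
    have hcrossC : Continuous (fun s => w ⬝ᵥ Z *ᵥ (A *ᵥ z s)) :=
      continuous_iff_continuousAt.2 fun s =>
        (hasDerivAt_dotProduct (hasDerivAt_const s w)
          (hasDerivAt_mulVec Z (hasDerivAt_mulVec A (hz s)))).continuousAt
    have hFTC : (∫ s in (0:ℝ)..τ, w ⬝ᵥ Z *ᵥ (A *ᵥ z s))
        = w ⬝ᵥ Z *ᵥ z τ - w ⬝ᵥ Z *ᵥ z 0 :=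
      intervalIntegral.integral_eq_sub_of_hasDerivAt (fun s _ => hcrossd s)
        (hcrossC.intervalIntegrable _ _)
    have hsplit : ∀ s : ℝ, (A *ᵥ z s + w) ⬝ᵥ Z *ᵥ (A *ᵥ z s + w)
        = (A *ᵥ z s) ⬝ᵥ Z *ᵥ (A *ᵥ z s)
          + (2 * (w ⬝ᵥ Z *ᵥ (A *ᵥ z s)) + w ⬝ᵥ Z *ᵥ w) := by
      intro s
      simp only [Matrix.mulVec_add, dotProduct_add, add_dotProduct]
      linear_combination dot_symm hZsym (A *ᵥ z s) w
    have hnn : 0 ≤ ∫ s in (0:ℝ)..τ, (A *ᵥ z s + w) ⬝ᵥ Z *ᵥ (A *ᵥ z s + w) :=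
      intervalIntegral.integral_nonneg hτ (fun s _ => hZsemi _)
    have hval : (∫ s in (0:ℝ)..τ, (A *ᵥ z s + w) ⬝ᵥ Z *ᵥ (A *ᵥ z s + w))
        = (∫ s in (0:ℝ)..τ, (A *ᵥ z s) ⬝ᵥ Z *ᵥ (A *ᵥ z s))
          + (2 * (w ⬝ᵥ Z *ᵥ z τ - w ⬝ᵥ Z *ᵥ z 0) + τ * (w ⬝ᵥ Z *ᵥ w)) := by
      rw [intervalIntegral.integral_congr (g := fun s =>
          (A *ᵥ z s) ⬝ᵥ Z *ᵥ (A *ᵥ z s)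
            + (2 * (w ⬝ᵥ Z *ᵥ (A *ᵥ z s)) + w ⬝ᵥ Z *ᵥ w)) (fun s _ => hsplit s)]
      rw [intervalIntegral.integral_add (hφc.intervalIntegrable _ _)
          (((continuous_const.fun_mul hcrossC).fun_add continuous_const).intervalIntegrable _ _)]
      rw [intervalIntegral.integral_add ((continuous_const.fun_mul hcrossC).intervalIntegrable _ _)
          (continuous_const.intervalIntegrable _ _)]
      rw [intervalIntegral.integral_const_mul, hFTC, intervalIntegral.integral_const]
      simp [smul_eq_mul]
    rw [hval, hz0] at hnn
    linarith [hnn]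
  -- the looped functional
  set f : ℝ → ℝ := fun τ =>
    T * (z τ ⬝ᵥ P *ᵥ z τ)
      + (T - τ) * ((z τ - J *ᵥ x) ⬝ᵥ Q *ᵥ (z τ - J *ᵥ x)
          + 2 * ((z τ - J *ᵥ x) ⬝ᵥ R *ᵥ z τ))
      + τ * (x ⬝ᵥ (Jᵀ * P * J - P) *ᵥ x)
      + (T - τ) * g τ
      + τ * (T - τ) * ((J *ᵥ x) ⬝ᵥ U *ᵥ (J *ᵥ x)) with hfdef
  set D : ℝ → ℝ := fun τ =>
    T * ((A *ᵥ z τ) ⬝ᵥ P *ᵥ z τ + z τ ⬝ᵥ P *ᵥ (A *ᵥ z τ))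
      - ((z τ - J *ᵥ x) ⬝ᵥ Q *ᵥ (z τ - J *ᵥ x) + 2 * ((z τ - J *ᵥ x) ⬝ᵥ R *ᵥ z τ))
      + (T - τ) * ((A *ᵥ z τ) ⬝ᵥ Q *ᵥ (z τ - J *ᵥ x) + (z τ - J *ᵥ x) ⬝ᵥ Q *ᵥ (A *ᵥ z τ)
          + 2 * ((A *ᵥ z τ) ⬝ᵥ R *ᵥ z τ + (z τ - J *ᵥ x) ⬝ᵥ R *ᵥ (A *ᵥ z τ)))
      + x ⬝ᵥ (Jᵀ * P * J - P) *ᵥ x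
      - g τ + (T - τ) * ((A *ᵥ z τ) ⬝ᵥ Z *ᵥ (A *ᵥ z τ))
      + (T - 2 * τ) * ((J *ᵥ x) ⬝ᵥ U *ᵥ (J *ᵥ x)) with hDdef
  have hfD : ∀ τ, HasDerivAt f (D τ) τ := by
    intro τ
    have hzτ := hz τ
    have hζ : HasDerivAt (fun s => z s - J *ᵥ x) (A *ᵥ z τ) τ := hzτ.sub_const _
    have h1 : HasDerivAt (fun s => z s ⬝ᵥ P *ᵥ z s)
        ((A *ᵥ z τ) ⬝ᵥ P *ᵥ z τ + z τ ⬝ᵥ P *ᵥ (A *ᵥ z τ)) τ :=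
      hasDerivAt_dotProduct hzτ (hasDerivAt_mulVec P hzτ)
    have h2 : HasDerivAt (fun s => (z s - J *ᵥ x) ⬝ᵥ Q *ᵥ (z s - J *ᵥ x))
        ((A *ᵥ z τ) ⬝ᵥ Q *ᵥ (z τ - J *ᵥ x) + (z τ - J *ᵥ x) ⬝ᵥ Q *ᵥ (A *ᵥ z τ)) τ :=
      hasDerivAt_dotProduct hζ (hasDerivAt_mulVec Q hζ)
    have h3 : HasDerivAt (fun s => (z s - J *ᵥ x) ⬝ᵥ R *ᵥ z s)
        ((A *ᵥ z τ) ⬝ᵥ R *ᵥ z τ + (z τ - J *ᵥ x) ⬝ᵥ R *ᵥ (A *ᵥ z τ)) τ :=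
      hasDerivAt_dotProduct hζ (hasDerivAt_mulVec R hzτ)
    have hT' : HasDerivAt (fun s : ℝ => T - s) (-1) τ := (hasDerivAt_id τ).const_sub T
    have hfull := ((((h1.const_mul T).add (hT'.mul (h2.add (h3.const_mul 2)))).add
        ((hasDerivAt_id τ).mul_const (x ⬝ᵥ (Jᵀ * P * J - P) *ᵥ x))).add
        (hT'.mul (hg τ))).add
        (((hasDerivAt_id τ).mul hT').mul_const ((J *ᵥ x) ⬝ᵥ U *ᵥ (J *ᵥ x)))
    have heq : D τ =
        T * ((A *ᵥ z τ) ⬝ᵥ P *ᵥ z τ + z τ ⬝ᵥ P *ᵥ (A *ᵥ z τ))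
          + (-1 * ((z τ - J *ᵥ x) ⬝ᵥ Q *ᵥ (z τ - J *ᵥ x)
              + 2 * ((z τ - J *ᵥ x) ⬝ᵥ R *ᵥ z τ))
            + (T - τ) * ((A *ᵥ z τ) ⬝ᵥ Q *ᵥ (z τ - J *ᵥ x)
              + (z τ - J *ᵥ x) ⬝ᵥ Q *ᵥ (A *ᵥ z τ)
              + 2 * ((A *ᵥ z τ) ⬝ᵥ R *ᵥ z τ + (z τ - J *ᵥ x) ⬝ᵥ R *ᵥ (A *ᵥ z τ))))
          + 1 * (x ⬝ᵥ (Jᵀ * P * J - P) *ᵥ x)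
          + (-1 * g τ + (T - τ) * ((A *ᵥ z τ) ⬝ᵥ Z *ᵥ (A *ᵥ z τ)))
          + (1 * (T - τ) + τ * -1) * ((J *ᵥ x) ⬝ᵥ U *ᵥ (J *ᵥ x)) := by
      rw [hDdef]; ring
    rw [hfdef, heq]
    exact hfull
  -- the derivative is negative on the open interval
  have hDneg : ∀ τ ∈ Set.Ioo (0:ℝ) T, D τ < 0 := by
    intro τ hτ
    obtain ⟨hτ0, hτT⟩ := hτ
    have hηne : Sum.elim (z τ) x ≠ 0 := by
      intro h; exact hx (funext fun i => congrFun h (Sum.inr i))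
    set η : Fin n ⊕ Fin n → ℝ := Sum.elim (z τ) x with hηdef
    set w : Fin n → ℝ := Z⁻¹ *ᵥ (N *ᵥ η) with hwdef
    have hZw : Z *ᵥ w = N *ᵥ η := hZZinv _
    have hPsiQ : η ⬝ᵥ F0 T A J P Q R N *ᵥ η
        + T * (η ⬝ᵥ F2 A J Q R Z *ᵥ η + η ⬝ᵥ F3 J U *ᵥ η) < 0 := by
      have := hPsi η hηne
      rwa [identI2] at this
    have hyne : Sum.elim η (T • w) ≠ 0 := by
      intro h; exact hηne (funext fun i => congrFun h (Sum.inl i))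
    have hPhiQ := hPhi _ hyne
    rw [identI3] at hPhiQ
    have e1 : (N *ᵥ η) ⬝ᵥ (T • w) = T * (w ⬝ᵥ Z *ᵥ w) := by
      rw [dotProduct_smul, smul_eq_mul, ← hZw, dotProduct_comm]
    have e2 : (T • w) ⬝ᵥ (N *ᵥ η) = T * (w ⬝ᵥ Z *ᵥ w) := by
      rw [smul_dotProduct, smul_eq_mul, ← hZw]
    have e3 : (T • w) ⬝ᵥ Z *ᵥ (T • w) = T * T * (w ⬝ᵥ Z *ᵥ w) := by
      rw [Matrix.mulVec_smul, dotProduct_smul, smul_dotProduct, smul_eq_mul, smul_eq_mul]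
      ring
    rw [e1, e2, e3] at hPhiQ
    have hTinv : T⁻¹ * (T * T * (w ⬝ᵥ Z *ᵥ w)) = T * (w ⬝ᵥ Z *ᵥ w) := by
      field_simp
    have hPhiQ' : η ⬝ᵥ F0 T A J P Q R N *ᵥ η - T * (η ⬝ᵥ F3 J U *ᵥ η)
        + T * (w ⬝ᵥ Z *ᵥ w) < 0 := by linarith [hPhiQ, hTinv]
    have hgB := hgineq τ hτ0.le w
    have hNζ : η ⬝ᵥ Nᵀ *ᵥ (z τ - J *ᵥ x)
        = w ⬝ᵥ Z *ᵥ z τ - w ⬝ᵥ Z *ᵥ (J *ᵥ x) := by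
      rw [dot_transpose_mulVec, ← hZw, dotProduct_comm, dot_symm hZsym,
        Matrix.mulVec_sub, dotProduct_sub]
    have hD : D τ = η ⬝ᵥ F0 T A J P Q R N *ᵥ η
        - 2 * (η ⬝ᵥ Nᵀ *ᵥ (z τ - J *ᵥ x))
        + (T - τ) * (η ⬝ᵥ F2 A J Q R Z *ᵥ η)
        + (T - 2 * τ) * (η ⬝ᵥ F3 J U *ᵥ η) - g τ := by
      rw [hDdef]
      exact identI1 T τ (g τ) A J P Q R U Z N hQsym (z τ) x
    rw [hNζ] at hD
    have hS : D τ ≤ η ⬝ᵥ F0 T A J P Q R N *ᵥ η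
        + (T - τ) * (η ⬝ᵥ F2 A J Q R Z *ᵥ η)
        + (T - 2 * τ) * (η ⬝ᵥ F3 J U *ᵥ η) + τ * (w ⬝ᵥ Z *ᵥ w) := by
      rw [hD]; linarith [hgB]
    have k1 : (T - τ) * (η ⬝ᵥ F0 T A J P Q R N *ᵥ η
        + T * (η ⬝ᵥ F2 A J Q R Z *ᵥ η + η ⬝ᵥ F3 J U *ᵥ η)) < 0 :=
      mul_neg_of_pos_of_neg (by linarith) hPsiQ
    have k2 : τ * (η ⬝ᵥ F0 T A J P Q R N *ᵥ η - T * (η ⬝ᵥ F3 J U *ᵥ η)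
        + T * (w ⬝ᵥ Z *ᵥ w)) < 0 := mul_neg_of_pos_of_neg hτ0 hPhiQ'
    have hTS : T * (η ⬝ᵥ F0 T A J P Q R N *ᵥ η
        + (T - τ) * (η ⬝ᵥ F2 A J Q R Z *ᵥ η)
        + (T - 2 * τ) * (η ⬝ᵥ F3 J U *ᵥ η) + τ * (w ⬝ᵥ Z *ᵥ w)) < 0 := by
      have : T * (η ⬝ᵥ F0 T A J P Q R N *ᵥ η
          + (T - τ) * (η ⬝ᵥ F2 A J Q R Z *ᵥ η)
          + (T - 2 * τ) * (η ⬝ᵥ F3 J U *ᵥ η) + τ * (w ⬝ᵥ Z *ᵥ w))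
          = (T - τ) * (η ⬝ᵥ F0 T A J P Q R N *ᵥ η
              + T * (η ⬝ᵥ F2 A J Q R Z *ᵥ η + η ⬝ᵥ F3 J U *ᵥ η))
            + τ * (η ⬝ᵥ F0 T A J P Q R N *ᵥ η - T * (η ⬝ᵥ F3 J U *ᵥ η)
              + T * (w ⬝ᵥ Z *ᵥ w)) := by ring
      rw [this]
      linarith [k1, k2]
    have hSneg : η ⬝ᵥ F0 T A J P Q R N *ᵥ η
        + (T - τ) * (η ⬝ᵥ F2 A J Q R Z *ᵥ η)
        + (T - 2 * τ) * (η ⬝ᵥ F3 J U *ᵥ η) + τ * (w ⬝ᵥ Z *ᵥ w) < 0 := by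
      by_contra h
      push_neg at h
      nlinarith [mul_nonneg hT.le h]
    linarith [hS, hSneg]
  -- strict decrease
  have hfc : Continuous f := continuous_iff_continuousAt.2 fun τ => (hfD τ).continuousAt
  have hanti : StrictAntiOn f (Set.Icc 0 T) := by
    apply strictAntiOn_of_deriv_neg (convex_Icc 0 T) hfc.continuousOn
    intro τ hτ
    rw [interior_Icc] at hτ
    rw [(hfD τ).deriv]
    exact hDneg τ hτ
  have hlt : f T < f 0 :=
    hanti (Set.left_mem_Icc.2 hT.le) (Set.right_mem_Icc.2 hT.le) hT
  -- endpoint values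
  have hfT : f T = T * (z T ⬝ᵥ P *ᵥ z T) + T * (x ⬝ᵥ (Jᵀ * P * J - P) *ᵥ x) := by
    rw [hfdef]; ring
  have hf0 : f 0 = T * ((J *ᵥ x) ⬝ᵥ P *ᵥ (J *ᵥ x)) := by
    rw [hfdef]
    simp only [hz0, hg0, sub_self, zero_dotProduct, dotProduct_zero, Matrix.mulVec_zero]
    ring
  have hscr : T * (x ⬝ᵥ scrI P A J T *ᵥ x) = f T - f 0 := by
    rw [hfT, hf0]
    have hexpT : mexp (T • Aᵀ) = (mexp (T • A))ᵀ := by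
      rw [mexp, mexp, ← Matrix.transpose_smul, Matrix.exp_transpose]
    have hzT : z T = mexp (T • A) *ᵥ (J *ᵥ x) := by rw [hzdef]
    rw [scrI, hexpT, hzT]
    simp only [Matrix.sub_mulVec, dotProduct_sub, ← Matrix.mulVec_mulVec,
      dot_transpose_mulVec]
    ring
  by_contra h
  push_neg at h
  nlinarith [mul_nonneg hT.le h, hscr, hlt]
end
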